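/- Let A_n be a compact subset of Q and let 𝒜_n = {(x,y) ∈ 𝕏 : x ∈ A_n and y_n > 0}. Then the closure of 𝒜_n in 𝕏 equals 𝒜_n ∪ (A_n × {0⃗}). -/

import Mathlib

open Set Topology

/-- The Hilbert cube `Q = ∏_{n ∈ ℕ} [0,1]`. -/
abbrev Q : Type := ℕ → unitInterval

/-- `𝕏 = {(x,y) ∈ Q × Q : y_m ≠ 0 for at most one index m}`. -/
def XX : Set (Q × Q) := {p | {m : ℕ | p.2 m ≠ 0}.Subsingleton}

/-- for a compact `A_n ⊆ Q` and
`𝒜_n = {(x,y) ∈ 𝕏 : x ∈ A_n and y_n > 0}`, the closure of `𝒜_n` in `𝕏` is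
`𝒜_n ∪ (A_n × {0⃗})`. -/
theorem closure_An_in_XX (n : ℕ) (An : Set Q) (hAn : IsCompact An) :
    closure {p : ↥XX | (p : Q × Q).1 ∈ An ∧ 0 < (p : Q × Q).2 n} =
      {p : ↥XX | (p : Q × Q).1 ∈ An ∧ 0 < (p : Q × Q).2 n} ∪
      {p : ↥XX | (p : Q × Q).1 ∈ An ∧ (p : Q × Q).2 = 0} := by
  set S : Set ↥XX := {p : ↥XX | (p : Q × Q).1 ∈ An ∧ 0 < (p : Q × Q).2 n} with hS
  have hAnClosed : IsClosed An := hAn.isClosed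
  -- continuous maps
  have hc1 : Continuous fun p : ↥XX => (p : Q × Q).1 := continuous_fst.comp continuous_subtype_val
  have hc2 : Continuous fun p : ↥XX => (p : Q × Q).2 := continuous_snd.comp continuous_subtype_val
  apply Set.Subset.antisymm
  · -- closure S ⊆ RHS
    have hC1 : IsClosed {p : ↥XX | (p : Q × Q).1 ∈ An} := hAnClosed.preimage hc1
    have hC2 : IsClosed {p : ↥XX | ∀ m, m ≠ n → (p : Q × Q).2 m = 0} := by
      have : {p : ↥XX | ∀ m, m ≠ n → (p : Q × Q).2 m = 0} =
          ⋂ m ∈ {m : ℕ | m ≠ n}, {p : ↥XX | (p : Q × Q).2 m = 0} := by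
        ext p; simp
      rw [this]
      refine isClosed_biInter fun m _ => ?_
      exact isClosed_eq ((continuous_apply m).comp hc2) continuous_const
    have hsub1 : closure S ⊆ {p : ↥XX | (p : Q × Q).1 ∈ An} :=
      closure_minimal (fun p hp => hp.1) hC1
    have hsub2 : closure S ⊆ {p : ↥XX | ∀ m, m ≠ n → (p : Q × Q).2 m = 0} := by
      refine closure_minimal (fun p hp m hm => ?_) hC2
      by_contra h
      exact hm (p.2 h (ne_of_gt hp.2))
    intro p hp
    by_cases h : 0 < (p : Q × Q).2 n
    · exact Or.inl ⟨hsub1 hp, h⟩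
    · refine Or.inr ⟨hsub1 hp, ?_⟩
      funext m
      by_cases hm : m = n
      · subst hm
        exact le_antisymm (not_lt.mp h) unitInterval.nonneg'
      · exact hsub2 hp m hm
  · -- RHS ⊆ closure S
    rintro p (hp | ⟨hpA, hp0⟩)
    · exact subset_closure hp
    · -- approximate (x, 0) by (x, (1/(k+1)) e_n)
      set u : ℕ → unitInterval := fun k => ⟨1 / (k + 1), by
        constructor
        · positivity
        · rw [div_le_one (by positivity)]
          linarith [Nat.cast_nonneg (α := ℝ) k]⟩ with hu
      have hupos : ∀ k, 0 < u k := fun k => by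
        rw [hu]
        exact Subtype.mk_lt_mk.mpr (by positivity)
      set y : ℕ → Q := fun k m => if m = n then u k else 0 with hy
      have hyXX : ∀ k, ((p : Q × Q).1, y k) ∈ XX := by
        intro k a ha b hb
        simp only [hy, mem_setOf_eq] at ha hb
        by_cases hab : a = n
        · by_cases hbb : b = n
          · rw [hab, hbb]
          · simp [hbb] at hb
        · simp [hab] at ha
      set f : ℕ → ↥XX := fun k => ⟨((p : Q × Q).1, y k), hyXX k⟩ with hf
      have hfS : ∀ k, f k ∈ S := by
        intro k
        refine ⟨hpA, ?_⟩
        simp only [hf, hy]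
        simpa using hupos k
      have htend : Filter.Tendsto f Filter.atTop (nhds p) := by
        rw [show p = ⟨(p : Q × Q), p.2⟩ from rfl]
        rw [tendsto_subtype_rng]
        have : (p : Q × Q) = ((p : Q × Q).1, (p : Q × Q).2) := rfl
        rw [this]
        refine Filter.Tendsto.prodMk_nhds tendsto_const_nhds ?_
        rw [tendsto_pi_nhds]
        intro m
        by_cases hm : m = n
        · subst hm
          have h2 : (p : Q × Q).2 m = 0 := by rw [hp0]; rfl
          rw [h2]
          simp only [hf, hy, if_pos rfl]
          rw [show (0 : unitInterval) = ⟨(0:ℝ), by norm_num, by norm_num⟩ from rfl,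
            tendsto_subtype_rng]
          simpa [hu] using tendsto_one_div_add_atTop_nhds_zero_nat (𝕜 := ℝ)
        · have h2 : (p : Q × Q).2 m = 0 := by rw [hp0]; rfl
          simp only [hf, hy, if_neg hm, h2]
          exact tendsto_const_nhds
      exact mem_closure_of_tendsto htend (Filter.Eventually.of_forall hfS)
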